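/- Every root of unity ω is conjugate over ℚ to at least one of −ω, ω², or −ω². Consequently, if S ∈ ℤ[z] is a polynomial such that gcd(S(z), S(−z)·S(z²)·S(−z²)) = 1 in ℚ[z], then no root of S is a root of unity, i.e. S has no cyclotomic factor. -/

import Mathlib

open Polynomial

/-- Every root of unity `ω` is conjugate over `ℚ` to one of `-ω`, `ω²`, `-ω²`; consequently,
if `S ∈ ℤ[z]` satisfies `gcd(S(z), S(-z) S(z²) S(-z²)) = 1` in `ℚ[z]` (i.e. these polynomials
are coprime), then no root of `S` is a root of unity, i.e. `S` has no cyclotomic factor. -/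
theorem root_of_unity_conjugates_and_cyclotomic_factor_test :
    (∀ ω : ℂ, (∃ k : ℕ, 0 < k ∧ ω ^ k = 1) →
      minpoly ℚ ω = minpoly ℚ (-ω) ∨ minpoly ℚ ω = minpoly ℚ (ω ^ 2) ∨
        minpoly ℚ ω = minpoly ℚ (-ω ^ 2)) ∧
    (∀ S : Polynomial ℤ,
      IsCoprime (S.map (Int.castRingHom ℚ))
        ((S.map (Int.castRingHom ℚ)).comp (-X) * (S.map (Int.castRingHom ℚ)).comp (X ^ 2) *
          (S.map (Int.castRingHom ℚ)).comp (-(X ^ 2))) →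
      ∀ z : ℂ, (∃ k : ℕ, 0 < k ∧ z ^ k = 1) → (Polynomial.aeval z) S ≠ 0) := by
  have main : ∀ ω : ℂ, (∃ k : ℕ, 0 < k ∧ ω ^ k = 1) →
      minpoly ℚ ω = minpoly ℚ (-ω) ∨ minpoly ℚ ω = minpoly ℚ (ω ^ 2) ∨
        minpoly ℚ ω = minpoly ℚ (-ω ^ 2) := by
    intro ω ⟨k, hk, hωk⟩
    have hfin : IsOfFinOrder ω := isOfFinOrder_iff_pow_eq_one.mpr ⟨k, hk, hωk⟩
    set n := orderOf ω with hn
    have hnpos : 0 < n := hfin.orderOf_pos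
    have hprim : IsPrimitiveRoot ω n := IsPrimitiveRoot.orderOf ω
    rcases Nat.even_or_odd n with hev | hod
    · -- n even, write n = 2*m
      obtain ⟨m, hm⟩ := hev
      have hmpos : 0 < m := by omega
      have hn2m : n = 2 * m := by omega
      -- ω^m = -1
      have hωm : ω ^ m = -1 := by
        have h2 : (ω ^ m) * (ω ^ m) = 1 := by
          rw [← pow_add]
          have : m + m = n := by omega
          rw [this]; exact hprim.pow_eq_one
        rcases mul_self_eq_one_iff.mp h2 with h1 | h1
        · exfalso
          have := hprim.pow_ne_one_of_pos_of_lt hmpos.ne' (by omega)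
          exact this h1
        · exact h1
      rcases Nat.even_or_odd m with hme | hmo
      · -- n ≡ 0 mod 4 : -ω = ω^(m+1), coprime
        left
        have heq : -ω = ω ^ (m + 1) := by
          rw [pow_succ, hωm]; ring
        have hcop : (m + 1).Coprime n := by
          rw [hn2m]
          refine Nat.Coprime.mul_right ?_ ?_
          · exact Nat.coprime_two_right.mpr (hme.add_one)
          · simp [Nat.add_comm]
        have hprim2 : IsPrimitiveRoot (ω ^ (m + 1)) n := hprim.pow_of_coprime _ hcop
        rw [heq, ← cyclotomic_eq_minpoly_rat hprim hnpos,
          ← cyclotomic_eq_minpoly_rat hprim2 hnpos]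
      · -- n ≡ 2 mod 4 : -ω² = ω^(m+2), coprime
        right; right
        have heq : -ω ^ 2 = ω ^ (m + 2) := by
          rw [pow_add, hωm]; ring
        have hcop : (m + 2).Coprime n := by
          rw [hn2m]
          refine Nat.Coprime.mul_right ?_ ?_
          · exact Nat.coprime_two_right.mpr (by obtain ⟨j, hj⟩ := hmo; exact ⟨j + 1, by omega⟩)
          · have : Nat.Coprime (2 + m) m := by
              rw [Nat.coprime_add_self_left]
              exact Nat.coprime_two_left.mpr hmo
            simpa [Nat.add_comm] using this
        have hprim2 : IsPrimitiveRoot (ω ^ (m + 2)) n := hprim.pow_of_coprime _ hcop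
        rw [heq, ← cyclotomic_eq_minpoly_rat hprim hnpos,
          ← cyclotomic_eq_minpoly_rat hprim2 hnpos]
    · -- n odd : ω² primitive
      right; left
      have hcop : Nat.Coprime 2 n := Nat.coprime_two_left.mpr hod
      have hprim2 : IsPrimitiveRoot (ω ^ 2) n := hprim.pow_of_coprime _ hcop
      rw [← cyclotomic_eq_minpoly_rat hprim hnpos, ← cyclotomic_eq_minpoly_rat hprim2 hnpos]
  refine ⟨main, ?_⟩
  intro S hcop z hz hSz
  set Sq := S.map (Int.castRingHom ℚ) with hSq
  have hint : IsIntegral ℚ z := by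
    obtain ⟨k, hk, hzk⟩ := hz
    exact ⟨X ^ k - 1, monic_X_pow_sub_C 1 (by omega), by simp [hzk]⟩
  -- aeval z Sq = 0
  have hSqz : aeval z Sq = 0 := by
    rw [hSq]
    rw [show Int.castRingHom ℚ = algebraMap ℤ ℚ from rfl, aeval_map_algebraMap]
    exact hSz
  have hdvd1 : minpoly ℚ z ∣ Sq := minpoly.dvd ℚ z hSqz
  -- key: aeval at conjugate vanishes
  have key : ∀ w : ℂ, minpoly ℚ z = minpoly ℚ w → aeval w Sq = 0 := by
    intro w hw
    obtain ⟨c, hc⟩ := hdvd1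
    rw [hc, map_mul, hw, minpoly.aeval, zero_mul]
  have hzero : aeval z (Sq.comp (-X) * Sq.comp (X ^ 2) * Sq.comp (-(X ^ 2))) = 0 := by
    simp only [map_mul, aeval_comp, map_neg, aeval_X, map_pow]
    rcases main z hz with h | h | h
    · rw [key (-z) h]; ring
    · rw [key (z ^ 2) h]; ring
    · have := key (-z ^ 2) h
      rw [show -z^2 = -(z^2) by ring] at this
      rw [this]; ring
  have hdvd2 : minpoly ℚ z ∣ Sq.comp (-X) * Sq.comp (X ^ 2) * Sq.comp (-(X ^ 2)) :=
    minpoly.dvd ℚ z hzero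
  exact minpoly.not_isUnit ℚ z (hcop.isUnit_of_dvd' hdvd1 hdvd2)
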